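/- If a rational Collatz cycle is not the zero cycle (0, 0, …), then its elements are either all strictly positive or all strictly negative. Precisely: if r ∈ ℚ[(2)], l ≥ 1, g^l(r) = r, and r ≠ 0, then either g^i(r) > 0 for all i, or g^i(r) < 0 for all i. -/
import Mathlib


/-- The rational Collatz function on `ℚ[(2)]` (rationals with odd denominator):
`g r = r/2` if the numerator of `r` is even, `(3r+1)/2` otherwise. -/
def gQ (r : ℚ) : ℚ := if Even r.num then r / 2 else (3 * r + 1) / 2

lemma gQ_pos {r : ℚ} (h : 0 < r) : 0 < gQ r := by
  unfold gQ; split <;> linarith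

lemma gQ_nonneg {r : ℚ} (h : 0 ≤ r) : 0 ≤ gQ r := by
  unfold gQ; split <;> linarith

lemma gQ_iter_pos {r : ℚ} (h : 0 < r) (i : ℕ) : 0 < gQ^[i] r := by
  induction i with
  | zero => simpa
  | succ n ih => rw [Function.iterate_succ_apply']; exact gQ_pos ih

lemma gQ_iter_nonneg {r : ℚ} (h : 0 ≤ r) (i : ℕ) : 0 ≤ gQ^[i] r := by
  induction i with
  | zero => simpa
  | succ n ih => rw [Function.iterate_succ_apply']; exact gQ_nonneg ih

/-- A nonzero rational Collatz cycle has either all elements strictly positive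
or all elements strictly negative. -/
theorem ratCollatzCycle_sign (r : ℚ) (hden : Odd r.den) (l : ℕ) (hl : 1 ≤ l)
    (hcyc : gQ^[l] r = r) (hne : r ≠ 0) :
    (∀ i : ℕ, 0 < gQ^[i] r) ∨ (∀ i : ℕ, gQ^[i] r < 0) := by
  rcases lt_trichotomy r 0 with hneg | hz | hpos
  · right
    intro i
    by_contra hcon
    push_neg at hcon
    -- gQ^[i] r ≥ 0, hence all later iterates are ≥ 0; but the cycle returns to r < 0
    have hper : ∀ n : ℕ, gQ^[l * n] r = r := by
      intro n
      rw [Function.iterate_mul]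
      exact Function.iterate_fixed hcyc n
    have hle : i ≤ l * (i + 1) := by nlinarith
    have h1 : gQ^[l * (i + 1)] r = gQ^[l * (i + 1) - i] (gQ^[i] r) := by
      rw [← Function.iterate_add_apply, Nat.sub_add_cancel hle]
    have h2 : 0 ≤ gQ^[l * (i + 1)] r := h1 ▸ gQ_iter_nonneg hcon _
    rw [hper (i + 1)] at h2
    linarith
  · exact absurd hz hne
  · exact Or.inl (gQ_iter_pos hpos)
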